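/- Let α > 0 be a constant and let H be a {1,2}-graph (a hypergraph whose edges have size 1 or 2) whose maximum clique (complete {1,2}-subgraph) has order t, with t ≥ α. Then the maximum over the standard simplex of L(H,x) = Σ_{i ∈ E^1} x_i + α Σ_{ij ∈ E^2} x_i x_j equals 1 + α/2 − α/(2t), and this maximum is attained by the characteristic vector of a maximum clique (weight 1/t on each of its t vertices). -/

import Mathlib

open Finset

def simplexS (n : ℕ) : Set (Fin n → ℝ) :=
  {x | (∀ i, 0 ≤ x i) ∧ ∑ i, x i = 1}

/-- L(H,x) for a {1,2}-graph with 1-edges `E1`, 2-edges `E2` and coefficient `α`. -/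
def lag12 {n : ℕ} (α : ℝ) (E1 : Finset (Fin n)) (E2 : Finset (Finset (Fin n)))
    (x : Fin n → ℝ) : ℝ :=
  (∑ i ∈ E1, x i) + α * ∑ e ∈ E2, ∏ v ∈ e, x v

/-- W spans a complete {1,2}-subgraph. -/
def IsClique12 {n : ℕ} (E1 : Finset (Fin n)) (E2 : Finset (Finset (Fin n)))
    (W : Finset (Fin n)) : Prop :=
  (∀ i ∈ W, i ∈ E1) ∧ ∀ i ∈ W, ∀ j ∈ W, i ≠ j → ({i, j} : Finset (Fin n)) ∈ E2

/-- The characteristic vector of a set `W`. -/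
noncomputable def charVec {n : ℕ} (W : Finset (Fin n)) : Fin n → ℝ :=
  fun i => if i ∈ W then ((W.card : ℝ))⁻¹ else 0

lemma two_mul_sum_powersetCard_two {ι : Type*} [DecidableEq ι] (s : Finset ι) (f : ι → ℝ) :
    2 * ∑ e ∈ s.powersetCard 2, ∏ k ∈ e, f k
      = (∑ k ∈ s, f k) ^ 2 - ∑ k ∈ s, (f k) ^ 2 := by
  induction s using Finset.induction_on with
  | empty =>
    rw [show (∅ : Finset ι).powersetCard 2 = ∅ from Finset.powersetCard_eq_empty.mpr (by simp)]
    simp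
  | insert a s ha ih =>
    rw [show (2 : ℕ) = (1 : ℕ).succ from rfl, Finset.powersetCard_succ_insert ha]
    have hdisj : Disjoint (s.powersetCard 2) ((s.powersetCard 1).image (insert a)) := by
      rw [Finset.disjoint_left]
      intro e he he'
      obtain ⟨e', he', rfl⟩ := Finset.mem_image.mp he'
      have : a ∉ s := ha
      have hsub := (Finset.mem_powersetCard.mp he).1
      exact this (hsub (Finset.mem_insert_self a e'))
    rw [Finset.sum_union hdisj, Finset.sum_image ?hinj]
    case hinj =>
      intro e he e' he' h
      have h1 : a ∉ e := fun hae => ha ((Finset.mem_powersetCard.mp he).1 hae)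
      have h2 : a ∉ e' := fun hae => ha ((Finset.mem_powersetCard.mp he').1 hae)
      rw [← Finset.erase_insert h1, h, Finset.erase_insert h2]
    have hprod : ∀ e ∈ s.powersetCard 1, ∏ k ∈ insert a e, f k = f a * ∏ k ∈ e, f k := by
      intro e he
      exact Finset.prod_insert (fun hae => ha ((Finset.mem_powersetCard.mp he).1 hae))
    rw [Finset.sum_congr rfl hprod, ← Finset.mul_sum]
    have h1 : ∑ e ∈ s.powersetCard 1, ∏ k ∈ e, f k = ∑ k ∈ s, f k := by
      rw [Finset.powersetCard_one, Finset.sum_map]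
      simp
    rw [h1, Finset.sum_insert ha, Finset.sum_insert ha]
    ring_nf
    ring_nf at ih
    linarith [ih]

lemma lag_affine {n : ℕ} (α : ℝ) (E1 : Finset (Fin n)) (E2 : Finset (Finset (Fin n)))
    (hE2 : ∀ e ∈ E2, e.card = 2) (x : Fin n → ℝ) {i j : Fin n} (hij : i ≠ j)
    (hnot : ({i, j} : Finset (Fin n)) ∉ E2) (u v : ℝ) :
    lag12 α E1 E2 (Function.update (Function.update x i u) j v)
      = lag12 α E1 E2 (Function.update (Function.update x i 0) j 0)
        + u * (lag12 α E1 E2 (Function.update (Function.update x i 1) j 0)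
            - lag12 α E1 E2 (Function.update (Function.update x i 0) j 0))
        + v * (lag12 α E1 E2 (Function.update (Function.update x i 0) j 1)
            - lag12 α E1 E2 (Function.update (Function.update x i 0) j 0)) := by
  set w : ℝ → ℝ → (Fin n → ℝ) :=
    fun u v => Function.update (Function.update x i u) j v with hw
  have hpt : ∀ (u v : ℝ) (k : Fin n),
      w u v k = if k = j then v else if k = i then u else x k := by
    intro u v k
    by_cases hkj : k = j
    · subst hkj; simp [hw]
    · by_cases hki : k = i
      · subst hki; simp [hw, Function.update_of_ne hkj, hij]
      · simp [hw, Function.update_of_ne hkj, Function.update_of_ne hki, hkj, hki]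
  have hE1sum : ∀ (u v : ℝ), ∑ k ∈ E1, w u v k
      = ∑ k ∈ E1, w 0 0 k + u * ((if i ∈ E1 then 1 else 0))
        + v * ((if j ∈ E1 then 1 else 0)) := by
    intro u v
    have : ∀ k ∈ E1, w u v k = w 0 0 k + u * (if k = i then 1 else 0)
        + v * (if k = j then 1 else 0) := by
      intro k _
      rw [hpt, hpt]
      by_cases hkj : k = j
      · subst hkj; simp [hij.symm, Ne.symm hij]; try ring
      · by_cases hki : k = i
        · subst hki; simp [hkj]; try ring
        · simp [hkj, hki]
    rw [Finset.sum_congr rfl this]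
    rw [Finset.sum_add_distrib, Finset.sum_add_distrib, ← Finset.mul_sum, ← Finset.mul_sum]
    simp [Finset.sum_ite_eq']
  -- per-edge identity
  have hedge : ∀ e ∈ E2, ∀ (u v : ℝ), ∏ k ∈ e, w u v k
      = ∏ k ∈ e, w 0 0 k + u * (∏ k ∈ e, w 1 0 k - ∏ k ∈ e, w 0 0 k)
        + v * (∏ k ∈ e, w 0 1 k - ∏ k ∈ e, w 0 0 k) := by
    intro e he u v
    have hcard := hE2 e he
    have hnotboth : ¬(i ∈ e ∧ j ∈ e) := by
      rintro ⟨hi, hj⟩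
      have hsub : ({i, j} : Finset (Fin n)) ⊆ e := by
        intro k hk
        rcases Finset.mem_insert.mp hk with rfl | hk
        · exact hi
        · rw [Finset.mem_singleton.mp hk]; exact hj
      have : ({i, j} : Finset (Fin n)) = e := by
        apply Finset.eq_of_subset_of_card_le hsub
        rw [hcard, Finset.card_insert_of_notMem (by simp [hij]), Finset.card_singleton]
      exact hnot (this ▸ he)
    by_cases hi : i ∈ e
    · have hj : j ∉ e := fun hj => hnotboth ⟨hi, hj⟩
      have hP : ∀ (u v : ℝ), ∏ k ∈ e, w u v k = u * ∏ k ∈ e.erase i, x k := by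
        intro u v
        rw [← Finset.mul_prod_erase e _ hi]
        congr 1
        · rw [hpt]; simp [hij]
        · apply Finset.prod_congr rfl
          intro k hk
          have hki : k ≠ i := Finset.ne_of_mem_erase hk
          have hkj : k ≠ j := fun h => hj (h ▸ Finset.mem_of_mem_erase hk)
          rw [hpt]; simp [hki, hkj]
      rw [hP, hP, hP, hP]; ring
    · by_cases hj : j ∈ e
      · have hP : ∀ (u v : ℝ), ∏ k ∈ e, w u v k = v * ∏ k ∈ e.erase j, x k := by
          intro u v
          rw [← Finset.mul_prod_erase e _ hj]
          congr 1
          · rw [hpt]; simp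
          · apply Finset.prod_congr rfl
            intro k hk
            have hkj : k ≠ j := Finset.ne_of_mem_erase hk
            have hki : k ≠ i := fun h => hi (h ▸ Finset.mem_of_mem_erase hk)
            rw [hpt]; simp [hki, hkj]
        rw [hP, hP, hP, hP]; ring
      · have hP : ∀ (u v : ℝ), ∏ k ∈ e, w u v k = ∏ k ∈ e, x k := by
          intro u v
          apply Finset.prod_congr rfl
          intro k hk
          have hki : k ≠ i := fun h => hi (h ▸ hk)
          have hkj : k ≠ j := fun h => hj (h ▸ hk)
          rw [hpt]; simp [hki, hkj]
        rw [hP, hP, hP, hP]; ring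
  have hE2sum : ∀ (u v : ℝ), ∑ e ∈ E2, ∏ k ∈ e, w u v k
      = ∑ e ∈ E2, ∏ k ∈ e, w 0 0 k
        + u * (∑ e ∈ E2, ∏ k ∈ e, w 1 0 k - ∑ e ∈ E2, ∏ k ∈ e, w 0 0 k)
        + v * (∑ e ∈ E2, ∏ k ∈ e, w 0 1 k - ∑ e ∈ E2, ∏ k ∈ e, w 0 0 k) := by
    intro u v
    rw [Finset.sum_congr rfl (fun e he => hedge e he u v)]
    rw [Finset.sum_add_distrib, Finset.sum_add_distrib, ← Finset.mul_sum, ← Finset.mul_sum,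
      Finset.sum_sub_distrib, Finset.sum_sub_distrib]
    try ring
  show lag12 α E1 E2 (w u v) = lag12 α E1 E2 (w 0 0)
      + u * (lag12 α E1 E2 (w 1 0) - lag12 α E1 E2 (w 0 0))
      + v * (lag12 α E1 E2 (w 0 1) - lag12 α E1 E2 (w 0 0))
  unfold lag12
  rw [hE1sum u v, hE1sum 1 0, hE1sum 0 1, hE2sum u v, hE2sum 1 0, hE2sum 0 1]
  ring

lemma lag_upper {n t : ℕ} (α : ℝ) (hα : 0 < α) (E1 : Finset (Fin n))
    (E2 : Finset (Finset (Fin n))) (hE2 : ∀ e ∈ E2, e.card = 2)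
    (hmax : ∀ W : Finset (Fin n), IsClique12 E1 E2 W → W.card ≤ t)
    (htα : α ≤ (t : ℝ)) :
    ∀ m : ℕ, ∀ x : Fin n → ℝ, (∀ i, 0 ≤ x i) → ∑ i, x i = 1 →
      (univ.filter fun k => x k ≠ 0).card ≤ m →
      lag12 α E1 E2 x ≤ 1 + α / 2 - α / (2 * t) := by
  have ht0 : (0 : ℝ) < t := lt_of_lt_of_le hα htα
  have ht0' : (t : ℝ) ≠ 0 := ne_of_gt ht0
  intro m
  induction m with
  | zero =>
    intro x hx0 hx1 hcard
    exfalso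
    have hemp : (univ.filter fun k => x k ≠ 0) = ∅ := Finset.card_eq_zero.mp (Nat.le_zero.mp hcard)
    have hzero : ∀ i : Fin n, x i = 0 := by
      intro i
      by_contra h
      have hmem : i ∈ (univ.filter fun k => x k ≠ 0) :=
        Finset.mem_filter.mpr ⟨Finset.mem_univ i, h⟩
      rw [hemp] at hmem
      exact absurd hmem (Finset.notMem_empty i)
    rw [Finset.sum_congr rfl (fun i _ => hzero i)] at hx1
    simp at hx1
  | succ m ih =>
    intro x hx0 hx1 hcard
    set supp := univ.filter fun k => x k ≠ 0 with hsupp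
    by_cases hbad : ∃ i ∈ supp, ∃ j ∈ supp, i ≠ j ∧ ({i, j} : Finset (Fin n)) ∉ E2
    · obtain ⟨i, hi, j, hj, hij, hnot⟩ := hbad
      have hxi : x i ≠ 0 := (Finset.mem_filter.mp hi).2
      have hxj : x j ≠ 0 := (Finset.mem_filter.mp hj).2
      have hb := lag_affine α E1 E2 hE2 x hij hnot
      have hxeq : Function.update (Function.update x i (x i)) j (x j) = x := by
        rw [Function.update_eq_self, Function.update_eq_self]
      -- abbreviations
      set L00 := lag12 α E1 E2 (Function.update (Function.update x i 0) j 0)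
      set a := lag12 α E1 E2 (Function.update (Function.update x i 1) j 0) - L00
      set b := lag12 α E1 E2 (Function.update (Function.update x i 0) j 1) - L00
      have hx' : lag12 α E1 E2 x = L00 + x i * a + x j * b := by
        conv_lhs => rw [← hxeq]
        exact hb (x i) (x j)
      -- sum facts for updated vectors
      have hsum : ∀ (u v : ℝ), ∑ k, Function.update (Function.update x i u) j v k
          = 1 - x i - x j + u + v := by
        intro u v
        rw [Finset.sum_update_of_mem (Finset.mem_univ j)]
        rw [Finset.sum_update_of_mem (Finset.mem_sdiff.mpr
          ⟨Finset.mem_univ i, by simp [hij]⟩)]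
        have hset : ((univ : Finset (Fin n)) \ {j}) \ {i} = univ \ {j, i} := by
          ext k
          simp only [Finset.mem_sdiff, Finset.mem_univ, Finset.mem_singleton,
            Finset.mem_insert, true_and]
          tauto
        rw [hset, Finset.sum_sdiff_eq_sub (Finset.subset_univ _), hx1,
          Finset.sum_pair (Ne.symm hij)]
        ring
      have hnn : ∀ (u v : ℝ), 0 ≤ u → 0 ≤ v →
          ∀ k, 0 ≤ Function.update (Function.update x i u) j v k := by
        intro u v hu hv k
        by_cases hkj : k = j
        · subst hkj; simp [hv]
        · by_cases hki : k = i
          · subst hki; simp [Function.update_of_ne hkj, hu]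
          · simp [Function.update_of_ne hkj, Function.update_of_ne hki]; exact hx0 k
      -- the two candidate moves
      rcases le_total b a with hab | hab
      · -- move mass to i : y = w (x i + x j) 0
        set y := Function.update (Function.update x i (x i + x j)) j 0 with hy
        have hL : lag12 α E1 E2 x ≤ lag12 α E1 E2 y := by
          have := hb (x i + x j) 0
          rw [hx', this]
          have h1 : 0 ≤ x i := hx0 i
          have h2 : 0 ≤ x j := hx0 j
          nlinarith [mul_le_mul_of_nonneg_left hab h2]
        have hsuppy : (univ.filter fun k => y k ≠ 0) ⊆ supp.erase j := by
          intro k hk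
          have hyk : y k ≠ 0 := (Finset.mem_filter.mp hk).2
          have hkj : k ≠ j := by
            rintro rfl
            apply hyk
            simp [hy]
          refine Finset.mem_erase.mpr ⟨hkj, ?_⟩
          by_cases hki : k = i
          · subst hki; exact hi
          · refine Finset.mem_filter.mpr ⟨Finset.mem_univ k, ?_⟩
            intro h
            apply hyk
            simp [hy, Function.update_of_ne hkj, Function.update_of_ne hki, h]
        have hcy : (univ.filter fun k => y k ≠ 0).card ≤ m := by
          calc (univ.filter fun k => y k ≠ 0).card ≤ (supp.erase j).card :=
                Finset.card_le_card hsuppy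
            _ = supp.card - 1 := Finset.card_erase_of_mem hj
            _ ≤ m := by omega
        refine le_trans hL (ih y (hnn _ _ (add_nonneg (hx0 i) (hx0 j)) le_rfl) ?_ hcy)
        rw [hsum]; ring
      · -- move mass to j
        set y := Function.update (Function.update x i 0) j (x i + x j) with hy
        have hL : lag12 α E1 E2 x ≤ lag12 α E1 E2 y := by
          have := hb 0 (x i + x j)
          rw [hx', this]
          have h1 : 0 ≤ x i := hx0 i
          have h2 : 0 ≤ x j := hx0 j
          nlinarith [mul_le_mul_of_nonneg_left hab h1]
        have hsuppy : (univ.filter fun k => y k ≠ 0) ⊆ supp.erase i := by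
          intro k hk
          have hyk : y k ≠ 0 := (Finset.mem_filter.mp hk).2
          have hki : k ≠ i := by
            rintro rfl
            apply hyk
            simp [hy, Function.update_of_ne hij]
          refine Finset.mem_erase.mpr ⟨hki, ?_⟩
          by_cases hkj : k = j
          · subst hkj; exact hj
          · refine Finset.mem_filter.mpr ⟨Finset.mem_univ k, ?_⟩
            intro h
            apply hyk
            simp [hy, Function.update_of_ne hkj, Function.update_of_ne hki, h]
        have hcy : (univ.filter fun k => y k ≠ 0).card ≤ m := by
          calc (univ.filter fun k => y k ≠ 0).card ≤ (supp.erase i).card :=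
                Finset.card_le_card hsuppy
            _ = supp.card - 1 := Finset.card_erase_of_mem hi
            _ ≤ m := by omega
        refine le_trans hL (ih y (hnn _ _ le_rfl (add_nonneg (hx0 i) (hx0 j))) ?_ hcy)
        rw [hsum]; ring
    · -- support is pairwise adjacent: direct bound
      push_neg at hbad
      set W := supp ∩ E1 with hW
      have hclique : IsClique12 E1 E2 W := by
        constructor
        · intro i hi; exact (Finset.mem_inter.mp hi).2
        · intro i hi j hj hij
          exact hbad i (Finset.mem_inter.mp hi).1 j (Finset.mem_inter.mp hj).1 hij
      have hWt : W.card ≤ t := hmax W hclique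
      set s := ∑ k ∈ W, x k with hs
      have hE1s : ∑ k ∈ E1, x k = s := by
        rw [hs]
        apply (Finset.sum_subset (Finset.inter_subset_right) ?_).symm
        intro k hk hkW
        by_contra h
        exact hkW (Finset.mem_inter.mpr ⟨Finset.mem_filter.mpr ⟨Finset.mem_univ k, h⟩, hk⟩)
      have hs1 : s ≤ 1 := by
        rw [hs, ← hx1]
        exact Finset.sum_le_sum_of_subset_of_nonneg (Finset.subset_univ W)
          (fun k _ _ => hx0 k)
      have hs0 : 0 ≤ s := Finset.sum_nonneg fun k _ => hx0 k
      set Q := ∑ k, (x k) ^ 2 with hQ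
      have hsQ : s ^ 2 ≤ (t : ℝ) * Q := by
        calc s ^ 2 ≤ (W.card : ℝ) * ∑ k ∈ W, (x k) ^ 2 := by
              exact_mod_cast sq_sum_le_card_mul_sum_sq (s := W) (f := x)
          _ ≤ (t : ℝ) * Q := by
              apply mul_le_mul (by exact_mod_cast hWt)
                (Finset.sum_le_sum_of_subset_of_nonneg (Finset.subset_univ W)
                  (fun k _ _ => sq_nonneg _))
                (Finset.sum_nonneg fun k _ => sq_nonneg _)
                ht0.le
      have hquad : ∑ e ∈ E2, ∏ v ∈ e, x v ≤ (1 - Q) / 2 := by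
        have hsub : E2 ⊆ (univ : Finset (Fin n)).powersetCard 2 := by
          intro e he
          exact Finset.mem_powersetCard.mpr ⟨Finset.subset_univ e, hE2 e he⟩
        have h1 : ∑ e ∈ E2, ∏ v ∈ e, x v
            ≤ ∑ e ∈ (univ : Finset (Fin n)).powersetCard 2, ∏ v ∈ e, x v :=
          Finset.sum_le_sum_of_subset_of_nonneg hsub
            (fun e _ _ => Finset.prod_nonneg fun k _ => hx0 k)
        have h2 := two_mul_sum_powersetCard_two (univ : Finset (Fin n)) x
        rw [hx1] at h2
        linarith
      have hQs : s ^ 2 / (t : ℝ) ≤ Q := (div_le_iff₀ ht0).mpr (by linarith [hsQ])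
      have hstep : lag12 α E1 E2 x ≤ s + α * ((1 - Q) / 2) := by
        unfold lag12
        rw [hE1s]
        have := mul_le_mul_of_nonneg_left hquad hα.le
        linarith
      refine le_trans hstep ?_
      have hfact : 1 + α / 2 - α / (2 * t) - (s + α * ((1 - s ^ 2 / t) / 2))
          = (1 - s) * (2 * t - α * (1 + s)) / (2 * t) := by
        field_simp
        ring
      have h2 : s + α * ((1 - Q) / 2) ≤ s + α * ((1 - s ^ 2 / t) / 2) := by
        have : 1 - Q ≤ 1 - s ^ 2 / t := by linarith
        nlinarith [hα.le]
      refine le_trans h2 ?_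
      rw [← sub_nonneg, hfact]
      apply div_nonneg _ (by positivity)
      apply mul_nonneg (by linarith)
      nlinarith

lemma two_mul_choose_two (t : ℕ) : 2 * Nat.choose t 2 = t * (t - 1) := by
  cases t with
  | zero => rfl
  | succ k =>
    rw [Nat.choose_two_right, Nat.succ_sub_one]
    exact Nat.mul_div_cancel'
      ((by simpa [Nat.mul_comm] using Nat.even_mul_succ_self k : Even ((k + 1) * k)).two_dvd)

lemma charVec_mem_simplex {n : ℕ} (W : Finset (Fin n)) (hW : W.Nonempty) :
    charVec W ∈ simplexS n := by
  refine ⟨?_, ?_⟩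
  · intro i
    unfold charVec
    split
    · positivity
    · exact le_refl 0
  · have hc : (W.card : ℝ) ≠ 0 := by
      simp [Finset.card_eq_zero, Finset.nonempty_iff_ne_empty.mp hW]
    unfold charVec
    rw [Finset.sum_ite_mem, Finset.univ_inter, Finset.sum_const, nsmul_eq_mul,
      mul_inv_cancel₀ hc]

lemma lag_charVec {n t : ℕ} (α : ℝ) (E1 : Finset (Fin n)) (E2 : Finset (Finset (Fin n)))
    (hE2 : ∀ e ∈ E2, e.card = 2) (ht : t ≠ 0) (W : Finset (Fin n))
    (hWcard : W.card = t) (hcl : IsClique12 E1 E2 W) :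
    lag12 α E1 E2 (charVec W) = 1 + α / 2 - α / (2 * t) := by
  have htR : ((t : ℝ)) ≠ 0 := Nat.cast_ne_zero.mpr ht
  unfold lag12 charVec
  have hE1part : ∑ i ∈ E1, (if i ∈ W then ((W.card : ℝ))⁻¹ else 0) = 1 := by
    rw [Finset.sum_ite_mem]
    rw [Finset.inter_eq_right.mpr (fun i hi => hcl.1 i hi)]
    rw [Finset.sum_const, nsmul_eq_mul, hWcard, mul_inv_cancel₀ htR]
  rw [hE1part]
  have hE2part : ∑ e ∈ E2, ∏ v ∈ e, (if v ∈ W then ((W.card : ℝ))⁻¹ else 0)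
      = (Nat.choose t 2 : ℝ) * ((t : ℝ)⁻¹) ^ 2 := by
    have hper : ∀ e ∈ E2, ∏ v ∈ e, (if v ∈ W then ((W.card : ℝ))⁻¹ else 0)
        = if e ⊆ W then ((t : ℝ)⁻¹) ^ 2 else 0 := by
      intro e he
      by_cases hsub : e ⊆ W
      · rw [if_pos hsub]
        rw [Finset.prod_congr rfl (fun v hv => if_pos (hsub hv))]
        rw [Finset.prod_const, hE2 e he, hWcard]
      · rw [if_neg hsub]
        obtain ⟨v, hv, hvW⟩ := Finset.not_subset.mp hsub
        exact Finset.prod_eq_zero hv (if_neg hvW)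
    rw [Finset.sum_congr rfl hper, ← Finset.sum_filter]
    have hfilt : E2.filter (· ⊆ W) = W.powersetCard 2 := by
      ext e
      simp only [Finset.mem_filter, Finset.mem_powersetCard]
      constructor
      · rintro ⟨he, hsub⟩; exact ⟨hsub, hE2 e he⟩
      · rintro ⟨hsub, hcard⟩
        obtain ⟨a, b, hab, rfl⟩ := Finset.card_eq_two.mp hcard
        refine ⟨hcl.2 a (hsub (by simp)) b (hsub (by simp)) hab, hsub⟩
    rw [hfilt, Finset.sum_const, Finset.card_powersetCard, hWcard, nsmul_eq_mul]
  rw [hE2part]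
  have h2c : 2 * ((Nat.choose t 2 : ℕ) : ℝ) = (t : ℝ) * ((t : ℝ) - 1) := by
    have := two_mul_choose_two t
    have h1 : ((2 * Nat.choose t 2 : ℕ) : ℝ) = ((t * (t - 1) : ℕ) : ℝ) := by
      rw [this]
    push_cast [Nat.cast_sub (Nat.one_le_iff_ne_zero.mpr ht)] at h1
    linarith
  have hC : ((Nat.choose t 2 : ℕ) : ℝ) = (t : ℝ) * ((t : ℝ) - 1) / 2 := by linarith
  rw [hC]
  field_simp
  ring

theorem motzkin_straus_one_two (α : ℝ) (hα : 0 < α) {n t : ℕ}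
    (E1 : Finset (Fin n)) (E2 : Finset (Finset (Fin n)))
    (hE2 : ∀ e ∈ E2, e.card = 2)
    (hex : ∃ W : Finset (Fin n), W.card = t ∧ IsClique12 E1 E2 W)
    (hmax : ∀ W : Finset (Fin n), IsClique12 E1 E2 W → W.card ≤ t)
    (htα : α ≤ (t : ℝ)) :
    IsGreatest (lag12 α E1 E2 '' simplexS n) (1 + α / 2 - α / (2 * t)) ∧
    ∀ W : Finset (Fin n), W.card = t → IsClique12 E1 E2 W →
      lag12 α E1 E2 (charVec W) = 1 + α / 2 - α / (2 * t) := by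
  have ht0R : (0 : ℝ) < t := lt_of_lt_of_le hα htα
  have htne : t ≠ 0 := Nat.pos_iff_ne_zero.mp (by exact_mod_cast ht0R)
  obtain ⟨W0, hW0card, hW0cl⟩ := hex
  have hval : ∀ W : Finset (Fin n), W.card = t → IsClique12 E1 E2 W →
      lag12 α E1 E2 (charVec W) = 1 + α / 2 - α / (2 * t) :=
    fun W hc hcl => lag_charVec α E1 E2 hE2 htne W hc hcl
  refine ⟨⟨⟨charVec W0, ?_, hval W0 hW0card hW0cl⟩, ?_⟩, hval⟩
  · exact charVec_mem_simplex W0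
      (Finset.card_pos.mp (hW0card ▸ Nat.pos_of_ne_zero htne))
  · rintro y ⟨x, ⟨hx0, hx1⟩, rfl⟩
    exact lag_upper α hα E1 E2 hE2 hmax htα _ x hx0 hx1 le_rfl
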